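/- Assume V is finite-dimensional. Let G₂ = {x ∈ G | π^x is isomorphic to π}; this set is a subgroup of G containing N. Let (ρ, W) be an irreducible representation of G₂ that is isomorphic to a subrepresentation of the induced representation Ind_N^{G₂} π. Then the induced representation Ind_{G₂}^G ρ is irreducible. -/

import Mathlib

/-- The induced representation `Ind_H^G ρ` realized concretely: for a subgroup `H ≤ G`
of finite index, the space of formal sums `Σ_{x ∈ G/H} x·w_x` with `w_x ∈ W` is
identified with the space of functions `f : G → W` satisfying `f(gh) = ρ(h⁻¹) f(g)`
(the value `f(x)` being the coefficient `w_x`). -/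
def IndSubmodule {G : Type*} [Group G] (H : Subgroup G) {W : Type*}
    [AddCommGroup W] [Module ℂ W] (ρ : Representation ℂ ↥H W) :
    Submodule ℂ (G → W) where
  carrier := {f | ∀ (g : G) (h : ↥H), f (g * ↑h) = ρ h⁻¹ (f g)}
  add_mem' := by
    intro a b ha hb g h
    simp only [Pi.add_apply, ha g h, hb g h, map_add]
  zero_mem' := by
    intro g h
    simp
  smul_mem' := by
    intro c f hf g h
    simp only [Pi.smul_apply, hf g h, map_smul]

/-- The action of `G` on `Ind_H^G ρ` by left translation. -/
def IndRep {G : Type*} [Group G] (H : Subgroup G) {W : Type*}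
    [AddCommGroup W] [Module ℂ W] (ρ : Representation ℂ ↥H W) :
    Representation ℂ G ↥(IndSubmodule H ρ) where
  toFun x :=
    { toFun := fun f => ⟨fun g => (f : G → W) (x⁻¹ * g), by
        intro g h
        show (f : G → W) (x⁻¹ * (g * ↑h)) = ρ h⁻¹ ((f : G → W) (x⁻¹ * g))
        rw [← mul_assoc]
        exact f.2 (x⁻¹ * g) h⟩
      map_add' := by intro a b; ext g; rfl
      map_smul' := by intro c a; ext g; rfl }
  map_one' := by
    ext f g
    simp
  map_mul' := by
    intro a b
    ext f g
    simp [mul_assoc]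

/- ============ auxiliary lemmas ============ -/

lemma keyInd {W V : Type*} [AddCommGroup W] [Module ℂ W] [AddCommGroup V] [Module ℂ V]
    {I : Type*} (σ : I → (W →ₗ[ℂ] W)) (τ : I → (V →ₗ[ℂ] V)) :
    ∀ (l : List ((W →ₗ[ℂ] V) × (I → (V →ₗ[ℂ] V)))),
      (∀ p ∈ l, (∀ n, p.1 ∘ₗ σ n = p.2 n ∘ₗ p.1)
        ∧ (∀ Uv : Submodule ℂ V, (∀ n v, v ∈ Uv → p.2 n v ∈ Uv) → Uv = ⊥ ∨ Uv = ⊤)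
        ∧ (∀ ψ : V →ₗ[ℂ] V, (∀ n, ψ ∘ₗ p.2 n = τ n ∘ₗ ψ) → ψ = 0)) →
      ∀ (X : Submodule ℂ W) (hX : ∀ n x, x ∈ X → σ n x ∈ X)
        (φ : ↥X →ₗ[ℂ] V),
        (∀ n (x : ↥X), φ ⟨σ n ↑x, hX n ↑x x.2⟩ = τ n (φ x)) →
        (∀ x : ↥X, (∀ p ∈ l, p.1 ↑x = 0) → φ x = 0) →
      φ = 0 := by
  intro l
  induction l with
  | nil =>
    intro _ X hX φ hφ hker
    ext x
    exact hker x (by simp)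
  | cons p l IH =>
    intro hl X hX φ hφ hker
    obtain ⟨hp1, hp2, hp3⟩ := hl p List.mem_cons_self
    have hl' : ∀ p' ∈ l, (∀ n, p'.1 ∘ₗ σ n = p'.2 n ∘ₗ p'.1)
        ∧ (∀ Uv : Submodule ℂ V, (∀ n v, v ∈ Uv → p'.2 n v ∈ Uv) → Uv = ⊥ ∨ Uv = ⊤)
        ∧ (∀ ψ : V →ₗ[ℂ] V, (∀ n, ψ ∘ₗ p'.2 n = τ n ∘ₗ ψ) → ψ = 0) :=
      fun p' hp' => hl p' (List.mem_cons_of_mem _ hp')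
    have himg : Submodule.map p.1 X = ⊥ ∨ Submodule.map p.1 X = ⊤ := by
      apply hp2
      rintro n v ⟨x, hxX, rfl⟩
      refine ⟨σ n x, hX n x hxX, ?_⟩
      have := congrArg (fun (F : W →ₗ[ℂ] V) => F x) (hp1 n)
      simpa using this
    rcases himg with himg | himg
    · have hvan : ∀ x : ↥X, p.1 ↑x = 0 := by
        intro x
        have : p.1 ↑x ∈ Submodule.map p.1 X := ⟨↑x, x.2, rfl⟩
        rw [himg] at this
        simpa using this
      exact IH hl' X hX φ hφ (fun x hx => hker x (by
        intro p' hp'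
        rcases List.mem_cons.mp hp' with h | h
        · subst h; exact hvan x
        · exact hx p' h))
    · have hsub : ∀ x : ↥X, p.1 ↑x = 0 → φ x = 0 := by
        set X' : Submodule ℂ W := X ⊓ LinearMap.ker p.1 with hX'
        have hX'inv : ∀ n x, x ∈ X' → σ n x ∈ X' := by
          rintro n x ⟨hx1, hx2⟩
          refine ⟨hX n x hx1, ?_⟩
          have := congrArg (fun (F : W →ₗ[ℂ] V) => F x) (hp1 n)
          simp only [LinearMap.comp_apply] at this
          have hx2' : p.1 x = 0 := hx2
          show σ n x ∈ LinearMap.ker p.1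
          rw [LinearMap.mem_ker, this, hx2', map_zero]
        set φ' : ↥X' →ₗ[ℂ] V := φ ∘ₗ Submodule.inclusion inf_le_left with hφ'
        have hφ'equiv : ∀ n (x : ↥X'), φ' ⟨σ n ↑x, hX'inv n ↑x x.2⟩ = τ n (φ' x) := by
          intro n x
          have : φ' ⟨σ n ↑x, hX'inv n ↑x x.2⟩
              = φ ⟨σ n ↑x, hX n ↑x x.2.1⟩ := rfl
          rw [this]
          exact hφ n ⟨↑x, x.2.1⟩
        have hker' : ∀ x : ↥X', (∀ p' ∈ l, p'.1 ↑x = 0) → φ' x = 0 := by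
          intro x hx
          refine hker ⟨↑x, x.2.1⟩ ?_
          intro p' hp'
          rcases List.mem_cons.mp hp' with h | h
          · subst h; exact x.2.2
          · exact hx p' h
        have : φ' = 0 := IH hl' X' hX'inv φ' hφ'equiv hker'
        intro x hx
        have : φ' ⟨↑x, ⟨x.2, hx⟩⟩ = 0 := by rw [this]; rfl
        exact this
      have hsurj : LinearMap.range (p.1 ∘ₗ X.subtype) = ⊤ := by
        rw [LinearMap.range_comp, Submodule.range_subtype]
        exact himg
      obtain ⟨s, hs⟩ := LinearMap.exists_rightInverse_of_surjective (p.1 ∘ₗ X.subtype) hsurj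
      have hsv : ∀ v, p.1 ↑(s v) = v := by
        intro v
        have := congrArg (fun (F : V →ₗ[ℂ] V) => F v) hs
        exact this
      set ψ : V →ₗ[ℂ] V := φ ∘ₗ s with hψ
      have hψequiv : ∀ n, ψ ∘ₗ p.2 n = τ n ∘ₗ ψ := by
        intro n
        ext v
        simp only [LinearMap.comp_apply, hψ]
        have h1 : p.1 (↑(s (p.2 n v)) - σ n ↑(s v)) = 0 := by
          have h2 := congrArg (fun (F : W →ₗ[ℂ] V) => F ↑(s v)) (hp1 n)
          simp only [LinearMap.comp_apply] at h2
          rw [map_sub, hsv, h2, hsv]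
          abel
        have h3 : φ (s (p.2 n v) - ⟨σ n ↑(s v), hX n _ (s v).2⟩) = 0 := by
          apply hsub
          exact h1
        rw [map_sub, sub_eq_zero] at h3
        rw [h3, hφ n (s v)]
      have hψ0 : ψ = 0 := hp3 ψ hψequiv
      ext x
      have h1 : p.1 (↑x - ↑(s (p.1 ↑x))) = 0 := by rw [map_sub, hsv]; abel
      have h3 : φ (x - s (p.1 ↑x)) = 0 := hsub _ h1
      rw [map_sub, sub_eq_zero] at h3
      have : φ (s (p.1 ↑x)) = ψ (p.1 ↑x) := rfl
      rw [h3, this, hψ0]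
      rfl

lemma indMem_prop {G : Type*} [Group G] (H : Subgroup G) {W : Type*}
    [AddCommGroup W] [Module ℂ W] (ρ : Representation ℂ ↥H W)
    (f : ↥(IndSubmodule H ρ)) (g : G) (k : ↥H) :
    (f : G → W) (g * ↑k) = ρ k⁻¹ ((f : G → W) g) := f.2 g k

lemma indRep_coe {G : Type*} [Group G] (H : Subgroup G) {W : Type*}
    [AddCommGroup W] [Module ℂ W] (ρ : Representation ℂ ↥H W) (x : G)
    (f : ↥(IndSubmodule H ρ)) (g : G) :
    ((IndRep H ρ x f : ↥(IndSubmodule H ρ)) : G → W) g = (f : G → W) (x⁻¹ * g) := rfl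

noncomputable def evalMap {G : Type*} [Group G] (H : Subgroup G) {W : Type*}
    [AddCommGroup W] [Module ℂ W] (ρ : Representation ℂ ↥H W) (x : G) :
    ↥(IndSubmodule H ρ) →ₗ[ℂ] W where
  toFun := fun f => (f : G → W) x
  map_add' := fun _ _ => rfl
  map_smul' := fun _ _ => rfl

lemma evalMap_apply {G : Type*} [Group G] (H : Subgroup G) {W : Type*}
    [AddCommGroup W] [Module ℂ W] (ρ : Representation ℂ ↥H W) (x : G)
    (f : ↥(IndSubmodule H ρ)) : evalMap H ρ x f = (f : G → W) x := rfl

/-- conjugate of a representation of a normal subgroup -/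
noncomputable def conjRep {G : Type*} [Group G] {N : Subgroup G} (hN : N.Normal)
    {V : Type*} [AddCommGroup V] [Module ℂ V]
    (π : Representation ℂ ↥N V) (c : G) (n : ↥N) : V →ₗ[ℂ] V :=
  π ⟨c⁻¹ * ↑n * c, by simpa using hN.conj_mem ↑n n.2 c⁻¹⟩

/-- conjugate of a representation of an intermediate subgroup, restricted to `N` -/
noncomputable def conjRep₂ {G : Type*} [Group G] {N G₂ : Subgroup G} (hN : N.Normal)
    (hNle : N ≤ G₂) {W : Type*} [AddCommGroup W] [Module ℂ W]
    (ρ : Representation ℂ ↥G₂ W) (c : G) (n : ↥N) : W →ₗ[ℂ] W :=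
  ρ ⟨c⁻¹ * ↑n * c, hNle (by simpa using hN.conj_mem ↑n n.2 c⁻¹)⟩


set_option maxHeartbeats 1000000 in
set_option synthInstance.maxHeartbeats 400000 in
/-- Let `N` be a normal subgroup of finite index in `G` and `(π, V)`
an irreducible representation of `N` on a nonzero finite-dimensional complex vector
space. Let `G₂ = {x ∈ G | π^x ≅ π}`, a subgroup of `G` containing `N`. If `(ρ, W)` is an
irreducible representation of `G₂` isomorphic to a subrepresentation of the induced
representation `Ind_N^{G₂} π`, then the induced representation `Ind_{G₂}^G ρ` is
irreducible. -/
theorem induced_from_G2_irreducible {G : Type*} [Group G] (N : Subgroup G)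
    (hN : N.Normal) [N.FiniteIndex]
    {V : Type*} [AddCommGroup V] [Module ℂ V] [Nontrivial V] [FiniteDimensional ℂ V]
    (π : Representation ℂ ↥N V)
    (hπirr : ∀ U : Submodule ℂ V, (∀ (g : ↥N) (v : V), v ∈ U → π g v ∈ U) →
      U = ⊥ ∨ U = ⊤)
    (G₂ : Subgroup G)
    (hG₂ : ∀ x : G, x ∈ G₂ ↔
      ∃ T : V ≃ₗ[ℂ] V, ∀ g g' : ↥N, (↑g' : G) = x⁻¹ * ↑g * x →
        (T : V →ₗ[ℂ] V) ∘ₗ (π g' : V →ₗ[ℂ] V) =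
          (π g : V →ₗ[ℂ] V) ∘ₗ (T : V →ₗ[ℂ] V))
    (hNle : N ≤ G₂)
    {W : Type*} [AddCommGroup W] [Module ℂ W] [Nontrivial W]
    (ρ : Representation ℂ ↥G₂ W)
    (hρirr : ∀ U : Submodule ℂ W, (∀ (g : ↥G₂) (w : W), w ∈ U → ρ g w ∈ U) →
      U = ⊥ ∨ U = ⊤)
    (hsub : ∃ Φ : W →ₗ[ℂ] ↥(IndSubmodule (N.subgroupOf G₂)
        (π.comp (Subgroup.subgroupOfEquivOfLe hNle).toMonoidHom)),
      Function.Injective Φ ∧ ∀ (g : ↥G₂) (w : W),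
        Φ (ρ g w) = IndRep (N.subgroupOf G₂)
          (π.comp (Subgroup.subgroupOfEquivOfLe hNle).toMonoidHom) g (Φ w)) :
    ∀ U : Submodule ℂ ↥(IndSubmodule G₂ ρ),
      (∀ (x : G) (w : ↥(IndSubmodule G₂ ρ)), w ∈ U → IndRep G₂ ρ x w ∈ U) →
      U = ⊥ ∨ U = ⊤ := by
  classical
  intro U hU
  by_cases hUbot : U = ⊥
  · exact Or.inl hUbot
  right
  set π' := π.comp (Subgroup.subgroupOfEquivOfLe hNle).toMonoidHom with hπ'def
  obtain ⟨Φ, hΦinj, hΦeq⟩ := hsub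
  -- inverses inject
  have hρinv : ∀ (k : ↥G₂) (v : W), ρ k⁻¹ (ρ k v) = v := by
    intro k v
    have h1 : ρ k⁻¹ * ρ k = 1 := by rw [← map_mul, inv_mul_cancel, map_one]
    calc ρ k⁻¹ (ρ k v) = (ρ k⁻¹ * ρ k) v := rfl
      _ = v := by rw [h1]; rfl
  -- conjugated irreducibility
  have hπcirr : ∀ (c : G) (Uv : Submodule ℂ V),
      (∀ (n : ↥N) v, v ∈ Uv → conjRep hN π c n v ∈ Uv) → Uv = ⊥ ∨ Uv = ⊤ := by
    intro c Uv hUv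
    apply hπirr
    intro g v hv
    have h := hUv ⟨c * ↑g * c⁻¹, by simpa using hN.conj_mem ↑g g.2 c⟩ v hv
    have he : conjRep hN π c (⟨c * ↑g * c⁻¹, by simpa using hN.conj_mem ↑g g.2 c⟩ : ↥N)
        = π g := by
      exact congrArg π (Subtype.ext (by show c⁻¹ * (c * ↑g * c⁻¹) * c = ↑g; group))
    rwa [he] at h
  -- Schur
  have schur : ∀ (c d : G) (ψ : V →ₗ[ℂ] V), ψ ≠ 0 →
      (∀ n : ↥N, ψ ∘ₗ conjRep hN π c n = conjRep hN π d n ∘ₗ ψ) → d⁻¹ * c ∈ G₂ := by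
    intro c d ψ hψ0 hcomm
    have hkerinv : ∀ (n : ↥N) v, v ∈ LinearMap.ker ψ → conjRep hN π c n v ∈ LinearMap.ker ψ := by
      intro n v hv
      have := congrArg (fun (F : V →ₗ[ℂ] V) => F v) (hcomm n)
      simp only [LinearMap.comp_apply] at this
      rw [LinearMap.mem_ker] at hv ⊢
      rw [this, hv, map_zero]
    have hker : LinearMap.ker ψ = ⊥ := by
      rcases hπcirr c (LinearMap.ker ψ) hkerinv with h | h
      · exact h
      · exact absurd (LinearMap.ker_eq_top.mp h) hψ0
    have hrnginv : ∀ (n : ↥N) v, v ∈ LinearMap.range ψ → conjRep hN π d n v ∈ LinearMap.range ψ := by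
      rintro n _ ⟨u, rfl⟩
      refine ⟨conjRep hN π c n u, ?_⟩
      have := congrArg (fun (F : V →ₗ[ℂ] V) => F u) (hcomm n)
      simpa using this
    have hrng : LinearMap.range ψ = ⊤ := by
      rcases hπcirr d (LinearMap.range ψ) hrnginv with h | h
      · exact absurd (LinearMap.range_eq_bot.mp h) hψ0
      · exact h
    have hbij : Function.Bijective ψ :=
      ⟨LinearMap.ker_eq_bot.mp hker, LinearMap.range_eq_top.mp hrng⟩
    rw [hG₂]
    refine ⟨LinearEquiv.ofBijective ψ hbij, ?_⟩
    intro g g' hgg'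
    have hcoe : ((LinearEquiv.ofBijective ψ hbij : V ≃ₗ[ℂ] V) : V →ₗ[ℂ] V) = ψ := rfl
    rw [hcoe]
    have h := hcomm ⟨d * ↑g * d⁻¹, by simpa using hN.conj_mem ↑g g.2 d⟩
    have h1 : conjRep hN π c (⟨d * ↑g * d⁻¹, by simpa using hN.conj_mem ↑g g.2 d⟩ : ↥N) = π g' := by
      refine congrArg π (Subtype.ext ?_)
      show c⁻¹ * (d * ↑g * d⁻¹) * c = ↑g'
      rw [hgg']; group
    have h2 : conjRep hN π d (⟨d * ↑g * d⁻¹, by simpa using hN.conj_mem ↑g g.2 d⟩ : ↥N) = π g := by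
      refine congrArg π (Subtype.ext ?_)
      show d⁻¹ * (d * ↑g * d⁻¹) * d = ↑g
      group
    rw [h1, h2] at h
    exact h
  -- equivariance of evaluations
  have E1 : ∀ (x : G) (n : ↥N) (h : ↥(IndSubmodule G₂ ρ)),
      evalMap G₂ ρ x (IndRep G₂ ρ ↑n h) = conjRep₂ hN hNle ρ x n (evalMap G₂ ρ x h) := by
    intro x n h
    rw [evalMap_apply, indRep_coe]
    set k : ↥G₂ := ⟨x⁻¹ * ↑n * x, hNle (by simpa using hN.conj_mem ↑n n.2 x⁻¹)⟩ with hk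
    have h1 : (↑n)⁻¹ * x = x * ↑(k⁻¹) := by
      show (↑n)⁻¹ * x = x * (x⁻¹ * ↑n * x)⁻¹
      group
    rw [h1, indMem_prop G₂ ρ h x k⁻¹, inv_inv]
    rfl
  have E2 : ∀ (c : G) (y : ↥G₂) (n : ↥N) (w : W),
      evalMap (N.subgroupOf G₂) π' y (Φ (conjRep₂ hN hNle ρ c n w))
        = conjRep hN π (c * ↑y) n (evalMap (N.subgroupOf G₂) π' y (Φ w)) := by
    intro c y n w
    set t : ↥G₂ := ⟨c⁻¹ * ↑n * c, hNle (by simpa using hN.conj_mem ↑n n.2 c⁻¹)⟩ with ht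
    have h1 : conjRep₂ hN hNle ρ c n w = ρ t w := rfl
    rw [h1, hΦeq t w, evalMap_apply, indRep_coe]
    have hu : ((y⁻¹ * t * y : ↥G₂)) ∈ N.subgroupOf G₂ := by
      rw [Subgroup.mem_subgroupOf]
      show ((y : G))⁻¹ * (c⁻¹ * ↑n * c) * ↑y ∈ N
      have heq : ((y : G))⁻¹ * (c⁻¹ * ↑n * c) * ↑y = (c * ↑y)⁻¹ * ↑n * (c * ↑y) := by group
      rw [heq]
      simpa using hN.conj_mem ↑n n.2 (c * ↑y)⁻¹
    set u : ↥(N.subgroupOf G₂) := ⟨y⁻¹ * t * y, hu⟩ with hudef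
    have h2 : t⁻¹ * y = y * ↑(u⁻¹) := by
      show t⁻¹ * y = y * (y⁻¹ * t * y)⁻¹
      group
    rw [h2, indMem_prop (N.subgroupOf G₂) π' (Φ w) y u⁻¹, inv_inv]
    have h3 : π' u = conjRep hN π (c * ↑y) n := by
      refine congrArg π (Subtype.ext ?_)
      show ((y : G))⁻¹ * (c⁻¹ * ↑n * c) * ↑y = (c * ↑y)⁻¹ * ↑n * (c * ↑y)
      group
    rw [h3]
    rfl
  have Q2 : ∀ w : W,
      (∀ q' : ↥G₂ ⧸ N.subgroupOf G₂, evalMap (N.subgroupOf G₂) π' (Quotient.out q') (Φ w) = 0)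
      → w = 0 := by
    intro w hw
    apply hΦinj
    rw [map_zero]
    apply Subtype.ext
    funext y
    show (Φ w : ↥G₂ → V) y = ((0 : ↥(IndSubmodule (N.subgroupOf G₂) π')) : ↥G₂ → V) y
    have hmem : ((Quotient.out (QuotientGroup.mk y : ↥G₂ ⧸ N.subgroupOf G₂)))⁻¹ * y
        ∈ N.subgroupOf G₂ :=
      QuotientGroup.eq.mp (QuotientGroup.out_eq' _)
    set k : ↥(N.subgroupOf G₂) := ⟨_, hmem⟩ with hkdef
    have h2 : y = (Quotient.out (QuotientGroup.mk y : ↥G₂ ⧸ N.subgroupOf G₂)) * ↑k := by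
      show y = _ * (_⁻¹ * y)
      group
    have h5 : (Φ w : ↥G₂ → V) (Quotient.out (QuotientGroup.mk y : ↥G₂ ⧸ N.subgroupOf G₂)) = 0 :=
      hw (QuotientGroup.mk y)
    rw [congrArg (Φ w : ↥G₂ → V) h2, indMem_prop (N.subgroupOf G₂) π' (Φ w) _ k,
      h5, map_zero]
    rfl
  -- finiteness
  haveI hG2fi : G₂.FiniteIndex := by
    refine ⟨fun h0 => ?_⟩
    have h1 : G₂.index ∣ N.index := Subgroup.index_dvd_of_le hNle
    rw [h0] at h1
    exact ‹N.FiniteIndex›.index_ne_zero (Nat.eq_zero_of_zero_dvd h1)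
  haveI hNG2fi : (N.subgroupOf G₂).FiniteIndex := by
    refine ⟨fun h0 => ?_⟩
    have h1 := Subgroup.relIndex_mul_index hNle
    have h2 : N.relIndex G₂ = 0 := h0
    rw [h2, zero_mul] at h1
    exact ‹N.FiniteIndex›.index_ne_zero h1.symm
  haveI : Finite (G ⧸ G₂) := Nat.finite_of_card_ne_zero hG2fi.index_ne_zero
  haveI : Finite (↥G₂ ⧸ N.subgroupOf G₂) := Nat.finite_of_card_ne_zero hNG2fi.index_ne_zero
  haveI : Fintype (G ⧸ G₂) := Fintype.ofFinite _
  haveI : Fintype (↥G₂ ⧸ N.subgroupOf G₂) := Fintype.ofFinite _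
  -- support
  set sp : ↥(IndSubmodule G₂ ρ) → Finset (G ⧸ G₂) :=
    fun h => Finset.univ.filter (fun q => (h : G → W) (Quotient.out q) ≠ 0) with hsp
  have hspmem : ∀ (h : ↥(IndSubmodule G₂ ρ)) (q : G ⧸ G₂),
      q ∈ sp h ↔ (h : G → W) (Quotient.out q) ≠ 0 := by
    intro h q; simp [hsp]
  have hvan : ∀ (h : ↥(IndSubmodule G₂ ρ)) (g : G),
      (h : G → W) (Quotient.out (QuotientGroup.mk g : G ⧸ G₂)) = 0 ↔ (h : G → W) g = 0 := by
    intro h g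
    have hmem : (Quotient.out (QuotientGroup.mk g : G ⧸ G₂))⁻¹ * g ∈ G₂ :=
      QuotientGroup.eq.mp (QuotientGroup.out_eq' _)
    set k : ↥G₂ := ⟨_, hmem⟩ with hkdef
    have h2 : g = Quotient.out (QuotientGroup.mk g : G ⧸ G₂) * ↑k := by
      show g = _ * (_⁻¹ * g)
      group
    have h3 : (h : G → W) g
        = ρ k⁻¹ ((h : G → W) (Quotient.out (QuotientGroup.mk g : G ⧸ G₂))) :=
      (congrArg (h : G → W) h2).trans (indMem_prop G₂ ρ h _ k)
    constructor
    · intro h0; rw [h3, h0, map_zero]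
    · intro h0
      have h4 : ρ k⁻¹ ((h : G → W) (Quotient.out (QuotientGroup.mk g : G ⧸ G₂))) = 0 :=
        h3.symm.trans h0
      have h5 := congrArg (ρ k⁻¹⁻¹) h4
      rw [hρinv k⁻¹, map_zero] at h5
      exact h5
  -- minimal support element
  have hex : ∃ nn : ℕ, ∃ h, h ∈ U ∧ h ≠ 0 ∧ (sp h).card = nn := by
    obtain ⟨h, hhU, hh0⟩ := (Submodule.ne_bot_iff U).mp hUbot
    exact ⟨(sp h).card, h, hhU, hh0, rfl⟩
  obtain ⟨f, hfU, hf0, hfcard⟩ := Nat.find_spec hex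
  have hmin : ∀ h, h ∈ U → h ≠ 0 → Nat.find hex ≤ (sp h).card :=
    fun h h1 h2 => Nat.find_min' hex ⟨h, h1, h2, rfl⟩
  have hne_sp : ∀ h : ↥(IndSubmodule G₂ ρ), h ≠ 0 → (sp h).Nonempty := by
    intro h hh0
    have hc : (h : G → W) ≠ 0 := fun hc => hh0 (Subtype.ext hc)
    obtain ⟨g, hg⟩ := Function.ne_iff.mp hc
    exact ⟨QuotientGroup.mk g, (hspmem h _).mpr (fun hcc => hg ((hvan h g).mp hcc))⟩
  -- the minimal support consists of a single coset
  have hone : (sp f).card = 1 := by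
    by_contra hcard
    have hpos : 0 < (sp f).card := Finset.card_pos.mpr (hne_sp f hf0)
    obtain ⟨qa, hqa, qb, hqb, hab⟩ := (Finset.one_lt_card (s := sp f)).mp (by omega)
    set a := Quotient.out qa with hadef
    set b := Quotient.out qb with hbdef
    have hfa : (f : G → W) a ≠ 0 := (hspmem f qa).mp hqa
    have hfb : (f : G → W) b ≠ 0 := (hspmem f qb).mp hqb
    -- span of the N-orbit of f
    set Y : Submodule ℂ ↥(IndSubmodule G₂ ρ) :=
      Submodule.span ℂ (Set.range (fun n : ↥N => IndRep G₂ ρ ↑n f)) with hYdef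
    have hYU : Y ≤ U := by
      rw [hYdef, Submodule.span_le]
      rintro _ ⟨n, rfl⟩
      exact hU ↑n f hfU
    have hfY : f ∈ Y := by
      rw [hYdef]
      apply Submodule.subset_span
      refine ⟨1, ?_⟩
      show IndRep G₂ ρ ((1 : ↥N) : G) f = f
      rw [OneMemClass.coe_one, map_one]
      rfl
    have hYinv : ∀ (n : ↥N) (y), y ∈ Y → IndRep G₂ ρ ↑n y ∈ Y := by
      intro n y hy
      have hmap : Submodule.map (IndRep G₂ ρ ↑n) Y ≤ Y := by
        rw [hYdef, Submodule.map_span, Submodule.span_le]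
        rintro _ ⟨_, ⟨m, rfl⟩, rfl⟩
        apply Submodule.subset_span
        refine ⟨n * m, ?_⟩
        show IndRep G₂ ρ ((n * m : ↥N) : G) f = IndRep G₂ ρ ↑n (IndRep G₂ ρ ↑m f)
        rw [Subgroup.coe_mul, map_mul]
        rfl
      exact hmap ⟨y, hy, rfl⟩
    -- supports of elements of Y are contained in the support of f
    have hYsupp : ∀ y : ↥(IndSubmodule G₂ ρ), y ∈ Y → ∀ g : G,
        (f : G → W) g = 0 → (y : G → W) g = 0 := by
      have hZle : Y ≤ ({
        carrier := {h : ↥(IndSubmodule G₂ ρ) |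
          ∀ g : G, (f : G → W) g = 0 → (h : G → W) g = 0}
        add_mem' := by
          intro p q hp hq g hg
          rw [Submodule.coe_add, Pi.add_apply, hp g hg, hq g hg, add_zero]
        zero_mem' := fun g hg => rfl
        smul_mem' := by
          intro cc p hp g hg
          rw [Submodule.coe_smul, Pi.smul_apply, hp g hg, smul_zero]
        } : Submodule ℂ ↥(IndSubmodule G₂ ρ)) := by
        rw [hYdef, Submodule.span_le]
        rintro _ ⟨n, rfl⟩ g hg
        rw [indRep_coe]
        set k : ↥G₂ := ⟨g⁻¹ * ↑(n⁻¹) * g,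
          hNle (by simpa using hN.conj_mem ↑(n⁻¹) (n⁻¹).2 g⁻¹)⟩ with hkdef
        have h2 : (↑n)⁻¹ * g = g * ↑k := by
          show (↑n)⁻¹ * g = g * (g⁻¹ * (↑n)⁻¹ * g)
          group
        rw [congrArg (f : G → W) h2, indMem_prop G₂ ρ f g k, hg, map_zero]
      intro y hy
      exact hZle hy
    -- evaluation at a is injective on Y
    have hEa : ∀ y : ↥(IndSubmodule G₂ ρ), y ∈ Y → (y : G → W) a = 0 → y = 0 := by
      intro y hy hya
      by_contra hy0
      have h1 := hmin y (hYU hy) hy0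
      have h2 : sp y ⊆ (sp f).erase qa := by
        intro q hq
        rw [Finset.mem_erase]
        have hq' := (hspmem y q).mp hq
        constructor
        · intro hqa'
          apply hq'
          rw [hqa']
          exact hya
        · refine (hspmem f q).mpr ?_
          intro hfq
          exact hq' (hYsupp y hy _ hfq)
      have h3 : (sp y).card ≤ (sp f).card - 1 := by
        calc (sp y).card ≤ ((sp f).erase qa).card := Finset.card_le_card h2
          _ = (sp f).card - 1 := Finset.card_erase_of_mem hqa
      omega
    set EY : ↥Y →ₗ[ℂ] W := (evalMap G₂ ρ a) ∘ₗ Y.subtype with hEYdef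
    have hEYzero : ∀ y : ↥Y, EY y = 0 → y = 0 := by
      intro y hy
      exact Subtype.ext (hEa ↑y y.2 hy)
    have hEYinj : Function.Injective EY := by
      intro y1 y2 h12
      have hsubY : (↑y1 - ↑y2 : ↥(IndSubmodule G₂ ρ)) ∈ Y := Y.sub_mem y1.2 y2.2
      have h12' : ((y1 : ↥(IndSubmodule G₂ ρ)) : G → W) a
          = ((y2 : ↥(IndSubmodule G₂ ρ)) : G → W) a := h12
      have h13 : ((↑y1 - ↑y2 : ↥(IndSubmodule G₂ ρ)) : G → W) a = 0 := by
        rw [Submodule.coe_sub, Pi.sub_apply, h12', sub_self]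
      have h14 := hEa _ hsubY h13
      rw [sub_eq_zero] at h14
      exact Subtype.ext h14
    set X : Submodule ℂ W := LinearMap.range EY with hXdef
    set eqv : ↥Y ≃ₗ[ℂ] ↥X := LinearEquiv.ofInjective EY hEYinj with heqvdef
    have heqv_apply : ∀ y : ↥Y, (↑(eqv y) : W) = EY y := by
      intro y
      exact LinearEquiv.ofInjective_apply EY (h := hEYinj) y
    have hsymm : ∀ (y : ↥Y) (x : ↥X), (↑x : W) = EY y → eqv.symm x = y := by
      intro y x hx
      apply eqv.injective
      rw [LinearEquiv.apply_symm_apply]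
      exact Subtype.ext (by rw [heqv_apply, hx])
    have hXval : ∀ x : ↥X, (↑x : W) = EY (eqv.symm x) := by
      intro x
      rw [← heqv_apply (eqv.symm x), LinearEquiv.apply_symm_apply]
    set S : ↥X →ₗ[ℂ] W := (evalMap G₂ ρ b ∘ₗ Y.subtype) ∘ₗ (eqv.symm : ↥X →ₗ[ℂ] ↥Y) with hSdef
    have hS_apply : ∀ x : ↥X, S x = ((↑(eqv.symm x) : ↥(IndSubmodule G₂ ρ)) : G → W) b :=
      fun x => rfl
    have hXinv : ∀ (n : ↥N) (w : W), w ∈ X → conjRep₂ hN hNle ρ a n w ∈ X := by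
      rintro n _ ⟨y, rfl⟩
      refine ⟨⟨IndRep G₂ ρ ↑n ↑y, hYinv n ↑y y.2⟩, ?_⟩
      show evalMap G₂ ρ a (IndRep G₂ ρ ↑n ↑y) = conjRep₂ hN hNle ρ a n (EY y)
      rw [E1]
      rfl
    have hSeq : ∀ (n : ↥N) (x : ↥X),
        S ⟨conjRep₂ hN hNle ρ a n ↑x, hXinv n ↑x x.2⟩ = conjRep₂ hN hNle ρ b n (S x) := by
      intro n x
      set y := eqv.symm x with hy
      set y' : ↥Y := ⟨IndRep G₂ ρ ↑n ↑y, hYinv n ↑y y.2⟩ with hy'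
      have h1 : EY y' = conjRep₂ hN hNle ρ a n ↑x := by
        show evalMap G₂ ρ a (IndRep G₂ ρ ↑n ↑y) = _
        rw [E1, hXval x]
        rfl
      have h2 : eqv.symm ⟨conjRep₂ hN hNle ρ a n ↑x, hXinv n ↑x x.2⟩ = y' :=
        hsymm y' _ h1.symm
      calc S ⟨conjRep₂ hN hNle ρ a n ↑x, hXinv n ↑x x.2⟩
          = evalMap G₂ ρ b ↑(eqv.symm ⟨conjRep₂ hN hNle ρ a n ↑x, hXinv n ↑x x.2⟩) := rfl
        _ = evalMap G₂ ρ b ↑y' := by rw [h2]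
        _ = evalMap G₂ ρ b (IndRep G₂ ρ ↑n ↑y) := rfl
        _ = conjRep₂ hN hNle ρ b n (evalMap G₂ ρ b ↑y) := E1 b n ↑y
        _ = conjRep₂ hN hNle ρ b n (S x) := rfl
    -- apply the key induction for each coordinate of the target
    set l : List ((W →ₗ[ℂ] V) × (↥N → (V →ₗ[ℂ] V))) :=
      (Finset.univ : Finset (↥G₂ ⧸ N.subgroupOf G₂)).toList.map
        (fun q' => ((evalMap (N.subgroupOf G₂) π' (Quotient.out q')) ∘ₗ Φ,
          fun n => conjRep hN π (a * ↑(Quotient.out q')) n)) with hldef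
    have hφ0 : ∀ q'' : ↥G₂ ⧸ N.subgroupOf G₂,
        ((evalMap (N.subgroupOf G₂) π' (Quotient.out q'') ∘ₗ Φ) ∘ₗ S) = 0 := by
      intro q''
      refine keyInd (fun n : ↥N => conjRep₂ hN hNle ρ a n)
        (fun n => conjRep hN π (b * ↑(Quotient.out q'')) n) l ?_ X hXinv _ ?_ ?_
      · -- hypotheses on list elements
        intro p hp
        obtain ⟨q', hq', rfl⟩ := List.mem_map.mp hp
        refine ⟨?_, ?_, ?_⟩
        · intro n
          ext w
          simp only [LinearMap.comp_apply]
          exact E2 a (Quotient.out q') n w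
        · intro Uv hUv
          exact hπcirr (a * ↑(Quotient.out q')) Uv hUv
        · intro ψ hψ
          by_contra hψ0
          have hmem := schur (a * ↑(Quotient.out q')) (b * ↑(Quotient.out q'')) ψ hψ0 (by
            intro n
            exact hψ n)
          have hb2 : b⁻¹ * a ∈ G₂ := by
            have h5 : b⁻¹ * a = ↑(Quotient.out q'')
                * ((b * ↑(Quotient.out q''))⁻¹ * (a * ↑(Quotient.out q')))
                * (↑(Quotient.out q'))⁻¹ := by group
            rw [h5]
            exact Subgroup.mul_mem _
              (Subgroup.mul_mem _ (Quotient.out q'').2 hmem)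
              (Subgroup.inv_mem _ (Quotient.out q').2)
          apply hab
          rw [← QuotientGroup.out_eq' qa, ← QuotientGroup.out_eq' qb]
          exact (QuotientGroup.eq.mpr hb2).symm
      · -- equivariance of the composite
        intro n x
        simp only [LinearMap.comp_apply]
        rw [hSeq n x]
        exact E2 b (Quotient.out q'') n (S x)
      · -- joint injectivity
        intro x hx
        have hx' : ∀ q' : ↥G₂ ⧸ N.subgroupOf G₂,
            evalMap (N.subgroupOf G₂) π' (Quotient.out q') (Φ ↑x) = 0 := by
          intro q'
          have hmem : ((evalMap (N.subgroupOf G₂) π' (Quotient.out q')) ∘ₗ Φ,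
              (fun n => conjRep hN π (a * ↑(Quotient.out q')) n)) ∈ l :=
            List.mem_map.mpr ⟨q', Finset.mem_toList.mpr (Finset.mem_univ _), rfl⟩
          exact hx _ hmem
        have hx0 : x = 0 := Subtype.ext (Q2 ↑x hx')
        rw [hx0]
        simp
    -- contradiction with f(b) ≠ 0
    have hfX : EY ⟨f, hfY⟩ ∈ X := ⟨⟨f, hfY⟩, rfl⟩
    set x₀ : ↥X := ⟨EY ⟨f, hfY⟩, hfX⟩ with hx₀def
    have hSx₀ : S x₀ = (f : G → W) b := by
      have h2 : eqv.symm x₀ = ⟨f, hfY⟩ := hsymm _ _ rfl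
      rw [hS_apply, h2]
    have hz : ∀ q' : ↥G₂ ⧸ N.subgroupOf G₂,
        evalMap (N.subgroupOf G₂) π' (Quotient.out q') (Φ (S x₀)) = 0 := by
      intro q'
      have := congrArg (fun (F : ↥X →ₗ[ℂ] V) => F x₀) (hφ0 q')
      simpa using this
    have hS0 : S x₀ = 0 := Q2 _ hz
    rw [hSx₀] at hS0
    exact hfb hS0
  -- step 4: conclude U = ⊤
  obtain ⟨q₀, hq₀⟩ := Finset.card_eq_one.mp hone
  have hfq₀ : (f : G → W) (Quotient.out q₀) ≠ 0 := by
    have hm : q₀ ∈ sp f := by rw [hq₀]; exact Finset.mem_singleton_self q₀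
    exact (hspmem f q₀).mp hm
  have hvanish : ∀ g : G, (QuotientGroup.mk g : G ⧸ G₂) ≠ q₀ → (f : G → W) g = 0 := by
    intro g hg
    have h1 : (QuotientGroup.mk g : G ⧸ G₂) ∉ sp f := by rw [hq₀]; simpa using hg
    have h2 : ¬ ((f : G → W) (Quotient.out (QuotientGroup.mk g : G ⧸ G₂)) ≠ 0) :=
      fun hc => h1 ((hspmem f _).mpr hc)
    exact (hvan f g).mp (not_not.mp h2)
  set f' := IndRep G₂ ρ (Quotient.out q₀)⁻¹ f with hf'def
  have hf'U : f' ∈ U := hU _ f hfU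
  have hf'app : ∀ g : G, (f' : G → W) g = (f : G → W) (Quotient.out q₀ * g) := by
    intro g; rw [hf'def, indRep_coe, inv_inv]
  have hf'1 : (f' : G → W) 1 ≠ 0 := by rw [hf'app, mul_one]; exact hfq₀
  have hf'supp : ∀ g : G, g ∉ G₂ → (f' : G → W) g = 0 := by
    intro g hg
    rw [hf'app]
    apply hvanish
    intro hc
    apply hg
    have h1 : (QuotientGroup.mk (Quotient.out q₀ * g) : G ⧸ G₂)
        = QuotientGroup.mk (Quotient.out q₀) := by
      rw [hc, QuotientGroup.out_eq']
    have h3 := QuotientGroup.eq.mp h1.symm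
    have h4 : (Quotient.out q₀)⁻¹ * (Quotient.out q₀ * g) = g := by group
    rw [h4] at h3
    exact h3
  -- the submodule of functions supported on G₂
  set C : Submodule ℂ ↥(IndSubmodule G₂ ρ) := ({
    carrier := {h : ↥(IndSubmodule G₂ ρ) | ∀ g : G, g ∉ G₂ → (h : G → W) g = 0}
    add_mem' := by
      intro p q hp hq g hg
      rw [Submodule.coe_add, Pi.add_apply, hp g hg, hq g hg, add_zero]
    zero_mem' := fun g hg => rfl
    smul_mem' := by
      intro cc p hp g hg
      rw [Submodule.coe_smul, Pi.smul_apply, hp g hg, smul_zero]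
    } : Submodule ℂ ↥(IndSubmodule G₂ ρ)) with hCdef
  have hf'C : f' ∈ C := hf'supp
  set U₀ : Submodule ℂ W := Submodule.map (evalMap G₂ ρ 1) (U ⊓ C) with hU₀def
  have hU₀inv : ∀ (t : ↥G₂) (w : W), w ∈ U₀ → ρ t w ∈ U₀ := by
    rintro t w ⟨h, ⟨hhU, hhC⟩, rfl⟩
    refine ⟨IndRep G₂ ρ ↑t h, ⟨hU ↑t h hhU, ?_⟩, ?_⟩
    · intro g hg
      rw [indRep_coe]
      apply hhC
      intro hcc
      apply hg
      have h1 : g = ↑t * ((↑t)⁻¹ * g) := by group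
      rw [h1]
      exact Subgroup.mul_mem _ t.2 hcc
    · show ((IndRep G₂ ρ ↑t h : ↥(IndSubmodule G₂ ρ)) : G → W) 1 = ρ t (evalMap G₂ ρ 1 h)
      rw [indRep_coe]
      have h2 : ((t : G))⁻¹ * 1 = 1 * ((t⁻¹ : ↥G₂) : G) := by
        show ((t : G))⁻¹ * 1 = 1 * ((t : G))⁻¹
        group
      rw [h2, indMem_prop G₂ ρ h 1 t⁻¹, inv_inv]
      rfl
  have hU₀top : U₀ = ⊤ := by
    rcases hρirr U₀ hU₀inv with h | h
    · exfalso
      have hm : (f' : G → W) 1 ∈ U₀ := ⟨f', ⟨hf'U, hf'C⟩, rfl⟩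
      rw [h] at hm
      exact hf'1 (by simpa using hm)
    · exact h
  -- conclude
  apply Submodule.eq_top_iff'.mpr
  intro F
  have hchoose : ∀ q : G ⧸ G₂, ∃ h : ↥(IndSubmodule G₂ ρ),
      (h ∈ U ∧ h ∈ C) ∧ (h : G → W) 1 = (F : G → W) (Quotient.out q) := by
    intro q
    have hm : (F : G → W) (Quotient.out q) ∈ U₀ := by rw [hU₀top]; trivial
    obtain ⟨h, hh1, hh2⟩ := hm
    exact ⟨h, hh1, hh2⟩
  choose hF hFmem hFval using hchoose
  have hsum : F = ∑ q : G ⧸ G₂, IndRep G₂ ρ (Quotient.out q) (hF q) := by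
    apply Subtype.ext
    have hcoe : ((∑ q : G ⧸ G₂, IndRep G₂ ρ (Quotient.out q) (hF q)
          : ↥(IndSubmodule G₂ ρ)) : G → W)
        = ∑ q : G ⧸ G₂, ((IndRep G₂ ρ (Quotient.out q) (hF q)
          : ↥(IndSubmodule G₂ ρ)) : G → W) :=
      AddSubmonoidClass.coe_finset_sum _ _
    funext g
    rw [hcoe, Finset.sum_apply]
    rw [Finset.sum_eq_single (QuotientGroup.mk g : G ⧸ G₂)]
    · -- main term
      rw [indRep_coe]
      set k : ↥G₂ := ⟨(Quotient.out (QuotientGroup.mk g : G ⧸ G₂))⁻¹ * g,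
        QuotientGroup.eq.mp (QuotientGroup.out_eq' _)⟩ with hkdef
      have h2 : (Quotient.out (QuotientGroup.mk g : G ⧸ G₂))⁻¹ * g = 1 * ↑k :=
        (one_mul _).symm
      rw [h2, indMem_prop G₂ ρ (hF _) 1 k, hFval]
      have h4 : Quotient.out (QuotientGroup.mk g : G ⧸ G₂) = g * ↑(k⁻¹) := by
        show _ = g * (_⁻¹ * g)⁻¹
        group
      have h3 : (F : G → W) (Quotient.out (QuotientGroup.mk g : G ⧸ G₂))
          = ρ k ((F : G → W) g) := by
        rw [congrArg (F : G → W) h4, indMem_prop G₂ ρ F g k⁻¹, inv_inv]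
      rw [h3, hρinv]
    · intro q _ hq
      rw [indRep_coe]
      apply (hFmem q).2
      intro hcc
      apply hq
      have h1 := QuotientGroup.eq.mpr hcc
      rw [QuotientGroup.out_eq'] at h1
      exact h1
    · intro hnm
      exact absurd (Finset.mem_univ _) hnm
  rw [hsum]
  apply Submodule.sum_mem
  intro q _
  exact hU (Quotient.out q) (hF q) (hFmem q).1
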